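/- Let k be a field, n ≥ 1, and let (X^g)_{g∈G} be a grading of M_n(k) by a group G in which every elementary matrix E_{ji} is homogeneous (a good grading). Then deg E_{ii} = 1 for every i, deg E_{ij} = (deg E_{ji})^{-1} for all i,j, and for all j > i one has deg E_{ji} = (deg E_{j,j−1})·(deg E_{j−1,j−2})⋯(deg E_{i+1,i}). Consequently, if the grading is connected then G is generated by the set {deg E_{i+1,i} : 1 ≤ i ≤ n−1}. -/

import Mathlib

open Matrix

/-- The telescoping product `chainProd d i j = d j (j-1) * d (j-1) (j-2) * ⋯ * d (i+1) i`
(for `i ≤ j`). -/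
def chainProd {G : Type*} [Group G] (d : ℕ → ℕ → G) (i j : ℕ) : G :=
  (((List.range' i (j - i)).reverse).map (fun t => d (t + 1) t)).prod

/-- If `(X^g)_{g∈G}` is a good grading of `M_n(k)` (every elementary matrix `E_{ji}` is
homogeneous, say of degree `d j i`), then `deg E_{ii} = 1`, `deg E_{ij} = (deg E_{ji})⁻¹`,
for `j > i` one has `deg E_{ji} = (deg E_{j,j−1})·(deg E_{j−1,j−2})⋯(deg E_{i+1,i})`, and
if the grading is connected then `G` is generated by the subdiagonal degrees
`{deg E_{i+1,i} : 1 ≤ i ≤ n−1}`. -/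
theorem stmt3 (k : Type*) [Field k] (n : ℕ) (hn : 1 ≤ n) (G : Type*) [Group G]
    (X : G → Submodule k (Matrix (Fin n) (Fin n) k))
    (hind : iSupIndep X) (hsup : (⨆ g, X g) = ⊤)
    (hmul : ∀ g h, X g * X h ≤ X (g * h))
    (d : ℕ → ℕ → G)
    (hd : ∀ i j : Fin n, Matrix.single j i (1 : k) ∈ X (d (j : ℕ) (i : ℕ))) :
    (∀ i : Fin n, d (i : ℕ) (i : ℕ) = 1) ∧
    (∀ i j : Fin n, d (i : ℕ) (j : ℕ) = (d (j : ℕ) (i : ℕ))⁻¹) ∧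
    (∀ i j : Fin n, (i : ℕ) < (j : ℕ) → d (j : ℕ) (i : ℕ) = chainProd d (i : ℕ) (j : ℕ)) ∧
    (Subgroup.closure {g | X g ≠ ⊥} = ⊤ →
      Subgroup.closure {g | ∃ i : ℕ, i + 1 < n ∧ g = d (i + 1) i} = ⊤) := by
  classical
  -- elementary matrices are nonzero
  have hne : ∀ (j i : Fin n), Matrix.single j i (1 : k) ≠ 0 := by
    intro j i h
    have := congrFun (congrFun h j) i
    rw [Matrix.single_apply_same] at this
    simp at this
  -- uniqueness of degree of a nonzero homogeneous element
  have huniq : ∀ (g h : G) (x : Matrix (Fin n) (Fin n) k),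
      x ≠ 0 → x ∈ X g → x ∈ X h → g = h := by
    intro g h x hx hg hh
    by_contra hgh
    have hle : X h ≤ ⨆ (j) (_ : j ≠ g), X j :=
      le_iSup₂ (f := fun j (_ : j ≠ g) => X j) h (Ne.symm hgh)
    have hdis : Disjoint (X g) (X h) := (hind g).mono_right hle
    exact hx ((Submodule.disjoint_def.mp hdis) x hg hh)
  -- multiplicative relation
  have rel : ∀ a b c : Fin n, d (a : ℕ) (b : ℕ) * d (b : ℕ) (c : ℕ) = d (a : ℕ) (c : ℕ) := by
    intro a b c
    have h1 : Matrix.single a c (1 : k) ∈ X (d (a : ℕ) (b : ℕ) * d (b : ℕ) (c : ℕ)) := by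
      have := hmul _ _ (Submodule.mul_mem_mul (hd b a) (hd c b))
      rwa [Matrix.single_mul_single_same, one_mul] at this
    exact huniq _ _ _ (hne a c) h1 (hd c a)
  -- diagonal degrees are 1
  have dii : ∀ i : Fin n, d (i : ℕ) (i : ℕ) = 1 := by
    intro i
    have := rel i i i
    exact left_eq_mul.mp this.symm
  -- inverse relation
  have dinv : ∀ i j : Fin n, d (i : ℕ) (j : ℕ) = (d (j : ℕ) (i : ℕ))⁻¹ := by
    intro i j
    have h1 : d (i : ℕ) (j : ℕ) * d (j : ℕ) (i : ℕ) = 1 := by rw [rel i j i, dii i]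
    exact eq_inv_of_mul_eq_one_left h1
  -- chain relation
  have hchain : ∀ (m i : ℕ), i + m < n → d (i + m) i = chainProd d i (i + m) := by
    intro m
    induction m with
    | zero =>
      intro i hi
      have := dii ⟨i, hi⟩
      simpa [chainProd] using this
    | succ m ih =>
      intro i hi
      have h1 : i + m < n := by omega
      have h2 : i + m + 1 < n := by omega
      have h3 : i < n := by omega
      have hr := rel ⟨i + m + 1, h2⟩ ⟨i + m, h1⟩ ⟨i, h3⟩
      simp only at hr
      have hsub : (i + m + 1) - i = m + 1 := by omega
      have hcp : chainProd d i (i + m + 1) =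
          d (i + m + 1) (i + m) * chainProd d i (i + m) := by
        simp [chainProd, hsub, List.range'_concat]
      have heq : (i + (m + 1)) = i + m + 1 := by omega
      rw [heq, hcp, ← ih i h1, hr]
  have hchain' : ∀ i j : Fin n, (i : ℕ) < (j : ℕ) →
      d (j : ℕ) (i : ℕ) = chainProd d (i : ℕ) (j : ℕ) := by
    intro i j hij
    have hj : (j : ℕ) = (i : ℕ) + ((j : ℕ) - (i : ℕ)) := by omega
    rw [hj]
    exact hchain _ _ (hj ▸ j.isLt)
  -- key: any nonzero homogeneous element has degree d j i for some nonzero entry (j,i)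
  have hA : ∀ (g : G) (x : Matrix (Fin n) (Fin n) k), x ∈ X g →
      ∀ j i : Fin n, x j i ≠ 0 → d (j : ℕ) (i : ℕ) = g := by
    intro g x hxg j i hxji
    by_contra hne'
    set s : Finset (Fin n × Fin n) :=
      Finset.univ.filter (fun pq => d (pq.1 : ℕ) (pq.2 : ℕ) = g) with hs
    set z : Matrix (Fin n) (Fin n) k :=
      ∑ pq ∈ s, Matrix.single pq.1 pq.2 (x pq.1 pq.2) with hz
    have hzg : z ∈ X g := by
      apply Submodule.sum_mem
      intro pq hpq
      have hdeg : d (pq.1 : ℕ) (pq.2 : ℕ) = g := (Finset.mem_filter.mp hpq).2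
      have : Matrix.single pq.1 pq.2 (x pq.1 pq.2)
          = x pq.1 pq.2 • Matrix.single pq.1 pq.2 (1 : k) := by
        rw [Matrix.smul_single, smul_eq_mul, mul_one]
      rw [this]
      exact Submodule.smul_mem _ _ (hdeg ▸ hd pq.2 pq.1)
    have hxz : x - z ∈ X g := Submodule.sub_mem _ hxg hzg
    have hxz' : x - z ∈ ⨆ (h) (_ : h ≠ g), X h := by
      have hx' : x = ∑ pq : Fin n × Fin n, Matrix.single pq.1 pq.2 (x pq.1 pq.2) := by
        conv_lhs => rw [Matrix.matrix_eq_sum_single x]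
        rw [← Finset.sum_product', Finset.univ_product_univ]
      have hsplit : x - z = ∑ pq ∈ sᶜ, Matrix.single pq.1 pq.2 (x pq.1 pq.2) := by
        rw [sub_eq_iff_eq_add, hz, Finset.sum_compl_add_sum]
        exact hx'
      rw [hsplit]
      apply Submodule.sum_mem
      intro pq hpq
      have hdeg : d (pq.1 : ℕ) (pq.2 : ℕ) ≠ g := by
        simpa [hs] using hpq
      have hmem : Matrix.single pq.1 pq.2 (x pq.1 pq.2)
          ∈ X (d (pq.1 : ℕ) (pq.2 : ℕ)) := by
        have : Matrix.single pq.1 pq.2 (x pq.1 pq.2)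
            = x pq.1 pq.2 • Matrix.single pq.1 pq.2 (1 : k) := by
          rw [Matrix.smul_single, smul_eq_mul, mul_one]
        rw [this]
        exact Submodule.smul_mem _ _ (hd pq.2 pq.1)
      exact (le_iSup₂ (f := fun h (_ : h ≠ g) => X h) _ hdeg) hmem
    have hxz0 : x - z = 0 :=
      (Submodule.disjoint_def.mp (hind g)) _ hxz hxz'
    have hxeq : x = z := by rwa [sub_eq_zero] at hxz0
    have hzji : z j i = 0 := by
      rw [hz]
      rw [Matrix.sum_apply]
      apply Finset.sum_eq_zero
      intro pq hpq
      have hdeg : d (pq.1 : ℕ) (pq.2 : ℕ) = g := (Finset.mem_filter.mp hpq).2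
      apply Matrix.single_apply_of_ne
      rintro ⟨h1, h2⟩
      exact hne' (by rw [← h1, ← h2]; exact hdeg)
    rw [hxeq] at hxji
    exact hxji hzji
  refine ⟨dii, dinv, hchain', ?_⟩
  intro hcon
  set S : Set G := {g | ∃ i : ℕ, i + 1 < n ∧ g = d (i + 1) i} with hS
  -- every degree d j i lies in the closure of S
  have hmem : ∀ i j : Fin n, d (j : ℕ) (i : ℕ) ∈ Subgroup.closure S := by
    have hlt : ∀ i j : Fin n, (i : ℕ) < (j : ℕ) →
        d (j : ℕ) (i : ℕ) ∈ Subgroup.closure S := by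
      intro i j hij
      rw [hchain' i j hij]
      apply list_prod_mem
      intro x hx
      simp only [List.mem_map, List.mem_reverse] at hx
      obtain ⟨t, ht, rfl⟩ := hx
      rw [List.mem_range'_1] at ht
      have htn : t + 1 < n := by
        have := j.isLt
        omega
      exact Subgroup.subset_closure ⟨t, htn, rfl⟩
    intro i j
    rcases lt_trichotomy (i : ℕ) (j : ℕ) with h | h | h
    · exact hlt i j h
    · rw [← h, dii i]; exact one_mem _
    · rw [dinv j i]
      exact inv_mem (hlt j i h)
  rw [eq_top_iff, ← hcon]
  apply (Subgroup.closure_le _).mpr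
  intro g hg
  obtain ⟨x, hxX, hx0⟩ := Submodule.exists_mem_ne_zero_of_ne_bot hg
  have : ∃ j i : Fin n, x j i ≠ 0 := by
    by_contra h
    push_neg at h
    exact hx0 (by ext j i; simpa using h j i)
  obtain ⟨j, i, hxji⟩ := this
  have := hA g x hxX j i hxji
  rw [← this]
  exact hmem i j
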